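/- The set of solutions (p2, p3, p10, p12, p41, p43, p45, p119) ∈ ℚ^8 with all coordinates nonzero of the system p41 = p10^3·p12, p43 = p10^2·p12^2, p45 = p10·p12^3, p119 = p41·p43·p10^2·p12^3, p119 = p10^12, p119 = p12^10, p119 = p2^60, p119 = p3^40 forms, under componentwise multiplication, a group of order exactly 8 in which every element squares to the identity; hence it is isomorphic to (ℤ/2ℤ)^3. -/

import Mathlib

private lemma rat_pm (x : ℚˣ) {n : ℕ} (hn : n ≠ 0) (h : (x : ℚ) ^ n = 1) :
    x = 1 ∨ x = -1 := by
  rcases pow_eq_one_iff_cases.mp h with h0 | h1 | ⟨h2, _⟩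
  · exact absurd h0 hn
  · exact Or.inl (Units.ext (by simpa using h1))
  · exact Or.inr (Units.ext (by simpa using h2))

private lemma rat_sq (x : ℚˣ) {n : ℕ} (hn : n ≠ 0) (h : (x : ℚ) ^ n = 1) : x ^ 2 = 1 := by
  rcases rat_pm x hn h with h | h <;> subst h <;> decide

private lemma rat_odd (x : ℚˣ) {n : ℕ} (hn : ¬ Even n) (h : (x : ℚ) ^ n = 1) : x = 1 := by
  rcases pow_eq_one_iff_cases.mp h with h0 | h1 | ⟨h2, he⟩
  · exact absurd (h0 ▸ Even.zero) hn
  · exact Units.ext (by simpa using h1)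
  · exact absurd he hn

private def Sset : Set (Fin 8 → ℚˣ) :=
  {p : Fin 8 → ℚˣ | p 4 = p 2 ^ 3 * p 3 ∧
    p 5 = p 2 ^ 2 * p 3 ^ 2 ∧
    p 6 = p 2 * p 3 ^ 3 ∧
    p 7 = p 4 * p 5 * p 2 ^ 2 * p 3 ^ 3 ∧
    p 7 = p 2 ^ 12 ∧
    p 7 = p 3 ^ 10 ∧
    p 7 = p 0 ^ 60 ∧
    p 7 = p 1 ^ 40}

private lemma mem_iff (p : Fin 8 → ℚˣ) :
    p ∈ Sset ↔ (p 0 ^ 2 = 1 ∧ p 1 ^ 2 = 1 ∧ p 2 = 1 ∧ p 3 ^ 2 = 1 ∧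
       p 4 = p 3 ∧ p 5 = 1 ∧ p 6 = p 3 ∧ p 7 = 1) := by
  constructor
  · rintro ⟨h41, h43, h45, hA, hB, hC, hD, hE⟩
    have hcne : ((p 2 : ℚ)) ≠ 0 := Units.ne_zero _
    have h41' := congrArg Units.val h41
    have h43' := congrArg Units.val h43
    have hA' := congrArg Units.val hA
    have hB' := congrArg Units.val hB
    have hC' := congrArg Units.val hC
    push_cast at h41' h43' hA' hB' hC'
    have key : (p 2 : ℚ) ^ 12 = (p 2 : ℚ) ^ 7 * (p 3 : ℚ) ^ 6 := by
      rw [← hB', hA', h41', h43']; ring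
    have hd6 : (p 3 : ℚ) ^ 6 = (p 2 : ℚ) ^ 5 := by
      have h' : (p 2 : ℚ) ^ 7 * (p 3 : ℚ) ^ 6 = (p 2 : ℚ) ^ 7 * (p 2 : ℚ) ^ 5 := by
        rw [← key]; ring
      exact mul_left_cancel₀ (pow_ne_zero 7 hcne) h'
    have h36 : (p 2 : ℚ) ^ 36 = (p 2 : ℚ) ^ 25 := by
      calc (p 2 : ℚ) ^ 36 = ((p 2 : ℚ) ^ 12) ^ 3 := by ring
        _ = ((p 3 : ℚ) ^ 10) ^ 3 := by rw [← hB', hC']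
        _ = ((p 3 : ℚ) ^ 6) ^ 5 := by ring
        _ = ((p 2 : ℚ) ^ 5) ^ 5 := by rw [hd6]
        _ = (p 2 : ℚ) ^ 25 := by ring
    have h11 : (p 2 : ℚ) ^ 11 = 1 := by
      have h' : (p 2 : ℚ) ^ 25 * (p 2 : ℚ) ^ 11 = (p 2 : ℚ) ^ 25 * 1 := by
        rw [mul_one]
        calc (p 2 : ℚ) ^ 25 * (p 2 : ℚ) ^ 11 = (p 2 : ℚ) ^ 36 := by ring
          _ = (p 2 : ℚ) ^ 25 := h36
      exact mul_left_cancel₀ (pow_ne_zero 25 hcne) h'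
    have hc1 : p 2 = 1 := rat_odd _ (by decide) h11
    have h7 : p 7 = 1 := by rw [hB, hc1, one_pow]
    have h7' : ((p 7 : ℚ)) = 1 := by rw [h7]; rfl
    have hd2 : p 3 ^ 2 = 1 := rat_sq (p 3) (n := 10) (by norm_num) (by rw [← hC', h7'])
    have hd2' : ((p 3 : ℚ)) ^ 2 = 1 := by
      have := congrArg Units.val hd2; push_cast at this; exact this
    refine ⟨rat_sq (p 0) (n := 60) (by norm_num) ?_, rat_sq (p 1) (n := 40) (by norm_num) ?_, hc1, hd2, ?_, ?_, ?_, h7⟩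
    · have := congrArg Units.val hD; push_cast at this; rw [← this, h7']
    · have := congrArg Units.val hE; push_cast at this; rw [← this, h7']
    · rw [h41, hc1, one_pow, one_mul]
    · rw [h43, hc1, one_pow, one_mul, hd2]
    · refine Units.ext ?_
      have h45' := congrArg Units.val h45
      push_cast at h45' ⊢
      rw [h45', hc1]
      push_cast
      calc (1 : ℚ) * (p 3 : ℚ) ^ 3 = (p 3 : ℚ) ^ 2 * (p 3 : ℚ) := by ring
        _ = (p 3 : ℚ) := by rw [hd2', one_mul]
  · rintro ⟨h0, h1, h2, h3, h4, h5, h6, h7⟩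
    have e0 : ((p 0 : ℚ)) ^ 2 = 1 := by
      have := congrArg Units.val h0; push_cast at this; exact this
    have e1 : ((p 1 : ℚ)) ^ 2 = 1 := by
      have := congrArg Units.val h1; push_cast at this; exact this
    have e3 : ((p 3 : ℚ)) ^ 2 = 1 := by
      have := congrArg Units.val h3; push_cast at this; exact this
    refine ⟨?_, ?_, ?_, ?_, ?_, ?_, ?_, ?_⟩
    · rw [h4, h2, one_pow, one_mul]
    · rw [h5, h2, one_pow, one_mul, h3]
    · refine Units.ext ?_
      have h2' := congrArg Units.val h2
      have h6' := congrArg Units.val h6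
      push_cast at h2' h6' ⊢
      rw [h6', h2', one_mul]
      calc (p 3 : ℚ) = (p 3 : ℚ) ^ 2 * (p 3 : ℚ) := by rw [e3, one_mul]
        _ = (p 3 : ℚ) ^ 3 := by ring
    all_goals refine Units.ext ?_
    all_goals have h2' := congrArg Units.val h2
    all_goals have h3' := congrArg Units.val h3
    all_goals have h4' := congrArg Units.val h4
    all_goals have h5' := congrArg Units.val h5
    all_goals have h7' := congrArg Units.val h7
    all_goals push_cast at h2' h3' h4' h5' h7' ⊢
    · rw [h7', h4', h5', h2']
      calc (1 : ℚ) = ((p 3 : ℚ) ^ 2) ^ 2 := by rw [e3]; norm_num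
        _ = (p 3 : ℚ) * 1 * 1 ^ 2 * (p 3 : ℚ) ^ 3 := by ring
    · rw [h7', h2']; norm_num
    · rw [h7']
      calc (1 : ℚ) = ((p 3 : ℚ) ^ 2) ^ 5 := by rw [e3]; norm_num
        _ = (p 3 : ℚ) ^ 10 := by ring
    · rw [h7']
      calc (1 : ℚ) = ((p 0 : ℚ) ^ 2) ^ 30 := by rw [e0]; norm_num
        _ = (p 0 : ℚ) ^ 60 := by ring
    · rw [h7']
      calc (1 : ℚ) = ((p 1 : ℚ) ^ 2) ^ 20 := by rw [e1]; norm_num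
        _ = (p 1 : ℚ) ^ 40 := by ring

private def Hgrp : Subgroup (Fin 8 → ℚˣ) where
  carrier := Sset
  one_mem' := by simp [Sset, Set.mem_setOf_eq]
  mul_mem' := by
    intro p q hp hq
    rw [mem_iff] at hp hq ⊢
    obtain ⟨a0, a1, a2, a3, a4, a5, a6, a7⟩ := hp
    obtain ⟨b0, b1, b2, b3, b4, b5, b6, b7⟩ := hq
    refine ⟨?_, ?_, ?_, ?_, ?_, ?_, ?_, ?_⟩ <;>
      simp only [Pi.mul_apply, mul_pow, a0, a1, a2, a3, a4, a5, a6, a7,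
        b0, b1, b2, b3, b4, b5, b6, b7, one_mul, mul_one]
  inv_mem' := by
    intro p hp
    rw [mem_iff] at hp ⊢
    obtain ⟨a0, a1, a2, a3, a4, a5, a6, a7⟩ := hp
    refine ⟨?_, ?_, ?_, ?_, ?_, ?_, ?_, ?_⟩ <;>
      simp only [Pi.inv_apply, inv_pow, a0, a1, a2, a3, a4, a5, a6, a7, inv_one]

private def uu : ZMod 2 → ℚˣ := fun x => if x = 0 then 1 else -1

private lemma uu_mul (a b : ZMod 2) : uu (a + b) = uu a * uu b := by
  fin_cases a <;> fin_cases b <;> simp [uu] <;> decide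

private lemma uu_sq (a : ZMod 2) : uu a ^ 2 = 1 := by
  fin_cases a <;> simp [uu] <;> decide

private def rr : ℚˣ → ZMod 2 := fun x => if x = 1 then 0 else 1

private lemma rr_uu (a : ZMod 2) : rr (uu a) = a := by
  fin_cases a <;> simp [uu, rr] <;> rfl

private lemma unit_pm (x : ℚˣ) (h : x ^ 2 = 1) : x = 1 ∨ x = -1 :=
  rat_pm x two_ne_zero (by have := congrArg Units.val h; push_cast at this; exact this)

private lemma uu_rr (x : ℚˣ) (h : x ^ 2 = 1) : uu (rr x) = x := by
  rcases unit_pm x h with h | h <;> subst h <;> decide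

private lemma rr_mul (x y : ℚˣ) (hx : x ^ 2 = 1) (hy : y ^ 2 = 1) :
    rr (x * y) = rr x + rr y := by
  conv_lhs => rw [← uu_rr x hx, ← uu_rr y hy, ← uu_mul]
  exact rr_uu _

private def gg (v : Fin 3 → ZMod 2) : Fin 8 → ℚˣ
  | 0 => uu (v 0)
  | 1 => uu (v 1)
  | 2 => 1
  | 3 => uu (v 2)
  | 4 => uu (v 2)
  | 5 => 1
  | 6 => uu (v 2)
  | 7 => 1

private lemma gg_mem (v : Fin 3 → ZMod 2) : gg v ∈ Hgrp := by
  show gg v ∈ Sset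
  rw [mem_iff]
  exact ⟨uu_sq (v 0), uu_sq (v 1), rfl, uu_sq (v 2), rfl, rfl, rfl, rfl⟩

private def eqv : Hgrp ≃* Multiplicative (Fin 3 → ZMod 2) where
  toFun p := Multiplicative.ofAdd ![rr (p.1 0), rr (p.1 1), rr (p.1 3)]
  invFun v := ⟨gg (Multiplicative.toAdd v), gg_mem _⟩
  left_inv p := by
    obtain ⟨p, hp⟩ := p
    rw [show (p ∈ Hgrp) = (p ∈ Sset) from rfl, mem_iff] at hp
    obtain ⟨h0, h1, h2, h3, h4, h5, h6, h7⟩ := hp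
    refine Subtype.ext (funext fun i => ?_)
    fin_cases i
    · exact (uu_rr _ h0 : uu (rr (p 0)) = p 0)
    · exact (uu_rr _ h1 : uu (rr (p 1)) = p 1)
    · exact (h2.symm : (1 : ℚˣ) = p 2)
    · exact (uu_rr _ h3 : uu (rr (p 3)) = p 3)
    · exact ((uu_rr _ h3).trans h4.symm : uu (rr (p 3)) = p 4)
    · exact (h5.symm : (1 : ℚˣ) = p 5)
    · exact ((uu_rr _ h3).trans h6.symm : uu (rr (p 3)) = p 6)
    · exact (h7.symm : (1 : ℚˣ) = p 7)
  right_inv v := by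
    refine Multiplicative.toAdd.injective (funext fun i => ?_)
    fin_cases i
    · exact (rr_uu _ : rr (uu (Multiplicative.toAdd v 0)) = _)
    · exact (rr_uu _ : rr (uu (Multiplicative.toAdd v 1)) = _)
    · exact (rr_uu _ : rr (uu (Multiplicative.toAdd v 2)) = _)
  map_mul' p q := by
    have hp := (mem_iff p.1).mp p.2
    have hq := (mem_iff q.1).mp q.2
    obtain ⟨a0, a1, -, a3, -, -, -, -⟩ := hp
    obtain ⟨b0, b1, -, b3, -, -, -, -⟩ := hq
    refine Multiplicative.toAdd.injective (funext fun i => ?_)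
    fin_cases i
    · exact (rr_mul _ _ a0 b0 : rr (p.1 0 * q.1 0) = _)
    · exact (rr_mul _ _ a1 b1 : rr (p.1 1 * q.1 1) = _)
    · exact (rr_mul _ _ a3 b3 : rr (p.1 3 * q.1 3) = _)

/-- Remark 3.3, algebra (ΛU₁, δ₁): nonzero solutions (tuples `Fin 8 → ℚˣ`,
coordinates `p 0 = p2`, `p 1 = p3`, `p 2 = p10`, `p 3 = p12`, `p 4 = p41`,
`p 5 = p43`, `p 6 = p45`, `p 7 = p119`) form a group of order 8 under
componentwise multiplication in which every element squares to the identity;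
hence it is isomorphic to (ℤ/2ℤ)³. -/
theorem stmt_6 :
    ∃ H : Subgroup (Fin 8 → ℚˣ),
      (H : Set (Fin 8 → ℚˣ)) =
        {p : Fin 8 → ℚˣ | p 4 = p 2 ^ 3 * p 3 ∧
        p 5 = p 2 ^ 2 * p 3 ^ 2 ∧
        p 6 = p 2 * p 3 ^ 3 ∧
        p 7 = p 4 * p 5 * p 2 ^ 2 * p 3 ^ 3 ∧
        p 7 = p 2 ^ 12 ∧
        p 7 = p 3 ^ 10 ∧
        p 7 = p 0 ^ 60 ∧
        p 7 = p 1 ^ 40} ∧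
      Nat.card H = 8 ∧
      (∀ x ∈ H, x * x = 1) ∧
      Nonempty (H ≃* Multiplicative (Fin 3 → ZMod 2)) := by
  refine ⟨Hgrp, rfl, ?_, ?_, ⟨eqv⟩⟩
  · rw [Nat.card_congr eqv.toEquiv]
    simp [Nat.card_eq_fintype_card]
  · intro x hx
    rw [show (x ∈ Hgrp) = (x ∈ Sset) from rfl, mem_iff] at hx
    obtain ⟨h0, h1, h2, h3, h4, h5, h6, h7⟩ := hx
    funext i
    show x i * x i = 1
    rw [← sq]
    fin_cases i
    · exact h0
    · exact h1
    · exact (by rw [h2, one_pow] : x 2 ^ 2 = 1)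
    · exact h3
    · exact (by rw [h4]; exact h3 : x 4 ^ 2 = 1)
    · exact (by rw [h5, one_pow] : x 5 ^ 2 = 1)
    · exact (by rw [h6]; exact h3 : x 6 ^ 2 = 1)
    · exact (by rw [h7, one_pow] : x 7 ^ 2 = 1)
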